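/- arXiv:2206.06819 — 2 statements merged into one kernel-verified Lean document; each statement's English description precedes it below -/
import Mathlib

section
/- Let A be a Noetherian commutative ring, I an ideal of A, and J, K ideals of A contained in I such that K ⊆ I² and I = J + K. Then there exists e ∈ K such that e(1 - e) ∈ J and I = J + (e). -/
/-- N. Mohan Kumar's lemma: if `I = J + K` with `K ⊆ I²`, then there is `e ∈ K`
with `e(1-e) ∈ J` and `I = J + (e)`. -/
theorem mohan_kumar_lemma {A : Type*} [CommRing A] [IsNoetherianRing A]
    (I J K : Ideal A) (hJ : J ≤ I) (hK : K ≤ I) (hKI2 : K ≤ I ^ 2)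
    (hJK : I = J ⊔ K) :
    ∃ e ∈ K, e * (1 - e) ∈ J ∧ I = J ⊔ Ideal.span {e} := by
  -- Step 1: K ≤ J ⊔ K²
  have hKJK2 : K ≤ J ⊔ K ^ 2 := by
    refine hKI2.trans ?_
    rw [hJK, sq, sq, Ideal.sup_mul, Ideal.mul_sup, Ideal.mul_sup]
    refine sup_le (sup_le ?_ ?_) (sup_le ?_ le_sup_right)
    · exact (Ideal.mul_le_left.trans le_sup_left)
    · exact (Ideal.mul_le_left.trans le_sup_left)
    · exact (Ideal.mul_le_right.trans le_sup_left)
  -- Work in the quotient B = A ⧸ J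
  let f := Ideal.Quotient.mk J
  have hsurj : Function.Surjective f := Ideal.Quotient.mk_surjective
  set Kb : Ideal (A ⧸ J) := K.map f with hKb
  have hidem : IsIdempotentElem Kb := by
    have h1 : Kb * Kb ≤ Kb := Ideal.mul_le_right
    have h2 : Kb ≤ Kb * Kb := by
      have := Ideal.map_mono (f := f) hKJK2
      rwa [Ideal.map_sup, Ideal.map_quotient_self, bot_sup_eq, sq,
        Ideal.map_mul, ← hKb] at this
    exact le_antisymm h1 h2
  have hfg : Kb.FG := (isNoetherian_def.mp inferInstance) Kb
  obtain ⟨eb, hebid, hebspan⟩ := (Ideal.isIdempotentElem_iff_of_fg Kb hfg).mp hidem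
  have hebmem : eb ∈ Kb := by
    rw [hebspan]; exact Submodule.mem_span_singleton_self _
  obtain ⟨e, heK, rfl⟩ := (Ideal.mem_map_iff_of_surjective f hsurj).mp hebmem
  refine ⟨e, heK, ?_, ?_⟩
  · have : f (e * (1 - e)) = 0 := by
      rw [map_mul, map_sub, map_one, mul_sub, mul_one, hebid.eq, sub_self]
    exact (Ideal.Quotient.eq_zero_iff_mem).mp this
  · apply le_antisymm
    · rw [hJK]
      refine sup_le le_sup_left ?_
      intro k hk
      have hkmem : f k ∈ Kb := Ideal.mem_map_of_mem f hk
      rw [hebspan, Submodule.mem_span_singleton] at hkmem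
      obtain ⟨b, hb⟩ := hkmem
      obtain ⟨a, rfl⟩ := hsurj b
      have : k - a * e ∈ J := by
        rw [← Ideal.Quotient.eq_zero_iff_mem]
        simp only [map_sub, map_mul]
        rw [← hb]; ring_nf
        simp [smul_eq_mul, f, mul_comm]
      have hmem : k = (k - a * e) + a * e := by ring
      rw [hmem]
      exact Submodule.add_mem _ (le_sup_left (α := Ideal A) this)
        (le_sup_right (α := Ideal A) (Ideal.mul_mem_left _ _
          (Ideal.subset_span rfl)))
    · exact sup_le hJ ((Ideal.span_le.mpr (by simpa using heK)).trans hK)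
end

section
/- Let A be a commutative Noetherian ring and J ⊆ A an ideal of height n. Let f ∈ A be nonzero such that the localization J_f is a proper ideal of A_f and J_f is generated by elements a₁,…,aₙ ∈ J. Then there exists σ ∈ SL_n(A_f) such that (a₁,…,aₙ)σ = (b₁,…,bₙ) where each bᵢ ∈ J ⊆ A and the ideal of A generated by b₁,…,bₙ has height n. -/
open Matrix

section AuxLemmas

variable {A : Type*} [CommRing A]

/-- Prime avoidance for a coset `x + D` with respect to a finite set of pairwise
incomparable primes. -/
lemma coset_prime_avoidance (T : Finset (Ideal A)) (hprime : ∀ q ∈ T, q.IsPrime)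
    (hinc : ∀ q ∈ T, ∀ q' ∈ T, q ≤ q' → q = q') (x : A) (D : Ideal A)
    (hyp : ∀ q ∈ T, ¬ (x ∈ q ∧ D ≤ q)) :
    ∃ d ∈ D, ∀ q ∈ T, x + d ∉ q := by
  classical
  induction T using Finset.induction with
  | empty => exact ⟨0, D.zero_mem, by simp⟩
  | @insert q₀ T hq₀T IH =>
    obtain ⟨d, hd, hdT⟩ := IH (fun q hq => hprime q (Finset.mem_insert_of_mem hq))
      (fun q hq q' hq' => hinc _ (Finset.mem_insert_of_mem hq) _ (Finset.mem_insert_of_mem hq'))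
      (fun q hq => hyp q (Finset.mem_insert_of_mem hq))
    have hq₀ : q₀.IsPrime := hprime q₀ (Finset.mem_insert_self _ _)
    by_cases hmem : x + d ∈ q₀
    · have hDq₀ : ¬ D ≤ q₀ := by
        by_cases hx : x ∈ q₀
        · exact fun h => hyp q₀ (Finset.mem_insert_self _ _) ⟨hx, h⟩
        · intro hD
          exact hx (by simpa using q₀.sub_mem hmem (hD hd))
      obtain ⟨u, huD, huq⟩ := SetLike.not_le_iff_exists.mp hDq₀
      have hy : ∀ q : {q // q ∈ T}, ∃ y, y ∈ q.1 ∧ y ∉ q₀ := by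
        rintro ⟨q, hq⟩
        have hne : ¬ q ≤ q₀ := by
          intro hle
          have := hinc q (Finset.mem_insert_of_mem hq) q₀ (Finset.mem_insert_self _ _) hle
          exact hq₀T (this ▸ hq)
        exact SetLike.not_le_iff_exists.mp hne
      choose y hy1 hy2 using hy
      set e := u * ∏ q : {q // q ∈ T}, y q with he
      have heD : e ∈ D := D.mul_mem_right _ huD
      have heq : ∀ q ∈ T, e ∈ q := by
        intro q hq
        obtain ⟨c, hc⟩ := Finset.dvd_prod_of_mem y (Finset.mem_univ (⟨q, hq⟩ : {q // q ∈ T}))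
        rw [he, hc]
        exact q.mul_mem_left _ (q.mul_mem_right _ (hy1 ⟨q, hq⟩))
      have henq₀ : e ∉ q₀ := by
        intro hcon
        rcases hq₀.mem_or_mem hcon with h | h
        · exact huq h
        · rw [Ideal.IsPrime.prod_mem_iff] at h
          obtain ⟨q, -, hq⟩ := h
          exact hy2 q hq
      refine ⟨d + e, D.add_mem hd heD, ?_⟩
      intro q hq
      rcases Finset.mem_insert.mp hq with rfl | hqT
      · intro hcon
        rw [← add_assoc] at hcon
        have : e ∈ q := by simpa using q.sub_mem hcon hmem
        exact henq₀ this
      · intro hcon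
        rw [← add_assoc] at hcon
        have : x + d ∈ q := by simpa using q.sub_mem hcon (heq q hqT)
        exact hdT q hqT this
    · refine ⟨d, hd, ?_⟩
      intro q hq
      rcases Finset.mem_insert.mp hq with rfl | hqT
      · exact hmem
      · exact hdT q hqT

/-- An `SL_n` move adding a combination of the other coordinates to coordinate `k`. -/
lemma exists_SL_update {R : Type*} [CommRing R] {n : ℕ} (β : Fin n → R) (k : Fin n)
    (t : Fin n → R) (htk : t k = 0) :
    ∃ τ : Matrix.SpecialLinearGroup (Fin n) R,
      Matrix.vecMul β τ.1 = Function.update β k (β k + ∑ j, β j * t j) := by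
  classical
  refine ⟨⟨Matrix.updateCol 1 k ((fun j => (1 : Matrix (Fin n) (Fin n) R) j k) + t), ?_⟩, ?_⟩
  · rw [Matrix.det_updateCol_add]
    have h1 : Matrix.updateCol (1 : Matrix (Fin n) (Fin n) R) k
        (fun j => (1 : Matrix (Fin n) (Fin n) R) j k) = 1 :=
      Matrix.updateCol_eq_self _ _
    have h2 : (Matrix.updateCol (1 : Matrix (Fin n) (Fin n) R) k t).det
        = Matrix.cramer (1 : Matrix (Fin n) (Fin n) R) t k := (Matrix.cramer_apply _ _ _).symm
    rw [h1, h2, Matrix.cramer_one, Matrix.det_one]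
    simp [htk]
  · funext k'
    by_cases h : k' = k
    · subst h
      rw [Function.update_self]
      show ∑ j, β j * _ = _
      simp only [Matrix.updateCol_self, Pi.add_apply]
      rw [Finset.sum_congr rfl (fun j _ => mul_add (β j) _ _), Finset.sum_add_distrib]
      congr 1
      simp [Matrix.one_apply, mul_ite, Finset.sum_ite_eq]
    · rw [Function.update_of_ne h]
      show ∑ j, β j * _ = _
      simp only [Matrix.updateCol_ne h]
      simp [Matrix.one_apply, mul_ite, Finset.sum_ite_eq]

/-- If `q` is minimal over `B` and `f ∈ q`, some multiple `s * f ^ m` with `s ∉ q` lies in `B`. -/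
lemma exists_mul_pow_mem_of_minimal {B q : Ideal A} {f : A}
    (hq : q ∈ B.minimalPrimes) (hfq : f ∈ q) :
    ∃ s m, s ∉ q ∧ s * f ^ m ∈ B := by
  classical
  have hqp : q.IsPrime := hq.1.1
  by_contra hcon
  push_neg at hcon
  let U : Submonoid A :=
    { carrier := {x | ∃ s m, s ∉ q ∧ x = s * f ^ m}
      one_mem' := ⟨1, 0, fun h => hqp.ne_top (q.eq_top_of_isUnit_mem h isUnit_one), by simp⟩
      mul_mem' := by
        rintro x y ⟨s, m, hs, rfl⟩ ⟨s', m', hs', rfl⟩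
        exact ⟨s * s', m + m', fun h => ((hqp.mem_or_mem h).elim hs hs'), by ring⟩ }
  have hdisj : Disjoint (B : Set A) (U : Set A) := by
    rw [Set.disjoint_left]
    rintro x hx ⟨s, m, hs, rfl⟩
    exact hcon s m hs hx
  obtain ⟨p, hp, hBp, hdisj'⟩ := Ideal.exists_le_prime_disjoint B U hdisj
  have hpq : p ≤ q := by
    intro x hx
    by_contra hxq
    exact Set.disjoint_left.mp hdisj' hx ⟨x, 0, hxq, by simp⟩
  have hqle : q ≤ p := hq.2 ⟨hp, hBp⟩ hpq
  exact Set.disjoint_left.mp hdisj' (hqle hfq) ⟨1, 1,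
    fun h => hqp.ne_top (q.eq_top_of_isUnit_mem h isUnit_one), by simp⟩

/-- Minimal primes over any ideal in a Noetherian ring form a finite set. -/
lemma Ideal.minimalPrimes_finite' [IsNoetherianRing A] (I : Ideal A) :
    I.minimalPrimes.Finite := by
  rw [Ideal.minimalPrimes_eq_comap]
  exact (minimalPrimes.finite_of_isNoetherianRing (A ⧸ I)).image _

end AuxLemmas

/-- The height of an ideal: the infimum of the heights of primes containing it. -/
noncomputable def idealHeight {R : Type*} [CommRing R] (I : Ideal R) : ℕ∞ :=
  ⨅ (p : PrimeSpectrum R) (_ : I ≤ p.asIdeal), Order.height p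

lemma le_idealHeight {R : Type*} [CommRing R] {I : Ideal R} {m : ℕ∞}
    (h : ∀ p : PrimeSpectrum R, I ≤ p.asIdeal → m ≤ Order.height p) : m ≤ idealHeight I :=
  le_iInf fun p => le_iInf fun hp => h p hp

lemma idealHeight_le_height {R : Type*} [CommRing R] {I : Ideal R} (p : PrimeSpectrum R)
    (h : I ≤ p.asIdeal) : idealHeight I ≤ Order.height p :=
  iInf₂_le p h

set_option maxHeartbeats 1000000 in
/-- If `J_f` is a proper ideal of `A_f` generated by `a₁,…,aₙ ∈ J`, then there is
`σ ∈ SLₙ(A_f)` transforming `(a₁,…,aₙ)` into `(b₁,…,bₙ)` with `bᵢ ∈ J` and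
the ideal of `A` generated by the `bᵢ` of height `n`. -/
theorem sln_move_generators {A : Type*} [CommRing A] [IsNoetherianRing A]
    (n : ℕ) (J : Ideal A) (hJ : idealHeight J = n)
    (f : A) (hf : f ≠ 0)
    (hproper : J.map (algebraMap A (Localization.Away f)) ≠ ⊤)
    (a : Fin n → A) (ha : ∀ i, a i ∈ J)
    (hgen : J.map (algebraMap A (Localization.Away f)) =
      Ideal.span (Set.range fun i => algebraMap A (Localization.Away f) (a i))) :
    ∃ (σ : Matrix.SpecialLinearGroup (Fin n) (Localization.Away f)) (b : Fin n → A),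
      (∀ i, b i ∈ J) ∧
      Matrix.vecMul (fun i => algebraMap A (Localization.Away f) (a i)) σ.1 =
        (fun i => algebraMap A (Localization.Away f) (b i)) ∧
      idealHeight (Ideal.span (Set.range b)) = n := by
  classical
  set R := Localization.Away f with hR
  set φ := algebraMap A R with hφ
  have hJht : ∀ (p : Ideal A) (hp : p.IsPrime), J ≤ p →
      (n : ℕ∞) ≤ Order.height (⟨p, hp⟩ : PrimeSpectrum A) := by
    intro p hp hle
    rw [← hJ]
    exact idealHeight_le_height (⟨p, hp⟩ : PrimeSpectrum A) hle
  have key : ∀ i : ℕ, i ≤ n →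
      ∃ (σ : Matrix.SpecialLinearGroup (Fin n) R) (b : Fin n → A),
        (∀ j, b j ∈ J) ∧
        Matrix.vecMul (fun j => φ (a j)) σ.1 = (fun j => φ (b j)) ∧
        Ideal.span (Set.range fun j => φ (b j)) = J.map φ ∧
        (∀ q (hq : q ∈ (Ideal.span (b '' {j : Fin n | (j : ℕ) < i})).minimalPrimes),
          (i : ℕ∞) ≤ Order.height (⟨q, hq.1.1⟩ : PrimeSpectrum A)) := by
    intro i
    induction i with
    | zero =>
      intro _
      refine ⟨1, a, ha, ?_, hgen.symm, ?_⟩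
      · simp
      · intro q hq
        simpa using zero_le _
    | succ i IH =>
      intro hin
      have hilt : i < n := Nat.lt_of_succ_le hin
      obtain ⟨σ, b, hbJ, hvec, hspan, hinv⟩ := IH (Nat.le_of_lt hilt)
      set k : Fin n := ⟨i, hilt⟩ with hk
      set B : Ideal A := Ideal.span (b '' {j : Fin n | (j : ℕ) < i}) with hB
      set v : Fin n → R := fun j => if j = k then 0 else φ (b j) with hv
      set S : Ideal R := Ideal.span (Set.range v) with hS
      set C : Ideal A := Ideal.comap φ S with hC
      set D : Ideal A := J ⊓ C with hD
      have hvS : ∀ j, j ≠ k → φ (b j) ∈ S := by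
        intro j hj
        have hvj : v j = φ (b j) := if_neg hj
        exact hvj ▸ Ideal.subset_span ⟨j, rfl⟩
      have hBC : B ≤ C := by
        rw [hB, Ideal.span_le]
        rintro x ⟨j, hj, rfl⟩
        have hjk : j ≠ k := by
          intro h
          rw [h] at hj
          exact absurd hj (lt_irrefl i)
        exact Ideal.mem_comap.mpr (hvS j hjk)
      have hfin : {q | q ∈ B.minimalPrimes ∧ ∃ hq : q.IsPrime,
          Order.height (⟨q, hq⟩ : PrimeSpectrum A) ≤ (i : ℕ∞)}.Finite :=
        (Ideal.minimalPrimes_finite' B).subset (fun q hq => hq.1)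
      set T := hfin.toFinset with hT
      have hprime : ∀ q ∈ T, q.IsPrime := by
        intro q hq
        exact (hfin.mem_toFinset.mp hq).2.1
      have hincomp : ∀ q ∈ T, ∀ q' ∈ T, q ≤ q' → q = q' := by
        intro q hq q' hq' hle
        exact le_antisymm hle (((hfin.mem_toFinset.mp hq').1).2 ((hfin.mem_toFinset.mp hq).1).1 hle)
      have hyp : ∀ q ∈ T, ¬ (b k ∈ q ∧ D ≤ q) := by
        rintro q hqT ⟨hbk, hDle⟩
        rw [hfin.mem_toFinset] at hqT
        obtain ⟨hqmin, hqp, hqht⟩ := hqT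
        have hJq : ¬ J ≤ q := by
          intro hle
          have h1 := hJht q hqp hle
          have hlt : (i : ℕ∞) < (n : ℕ∞) := by exact_mod_cast hilt
          exact absurd (le_trans h1 hqht) (not_le.mpr hlt)
        obtain ⟨x, hxJ, hxq⟩ := SetLike.not_le_iff_exists.mp hJq
        have hCq : C ≤ q := by
          intro c hc
          have hxc : x * c ∈ D := ⟨J.mul_mem_right c hxJ, C.mul_mem_left x hc⟩
          rcases hqp.mem_or_mem (hDle hxc) with h | h
          · exact absurd h hxq
          · exact h
        have hbq : ∀ j, b j ∈ q := by
          intro j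
          by_cases hjk : j = k
          · exact hjk ▸ hbk
          · exact hCq (Ideal.mem_comap.mpr (hvS j hjk))
        by_cases hfq : f ∈ q
        · obtain ⟨s, m, hsq, hsB⟩ := exists_mul_pow_mem_of_minimal hqmin hfq
          have h1 : φ (s * f ^ m) ∈ S := Ideal.mem_comap.mp (hBC hsB)
          have h2 : φ s * φ f ^ m ∈ S := by
            rw [_root_.map_mul, _root_.map_pow] at h1
            exact h1
          have h3 : φ s ∈ S :=
            (S.mul_unit_mem_iff_mem ((IsLocalization.Away.algebraMap_isUnit (S := R) f).pow m)).mp h2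
          exact hsq (hCq (Ideal.mem_comap.mpr h3))
        · have hdisj : Disjoint (↑(Submonoid.powers f) : Set A) (q : Set A) := by
            rw [Set.disjoint_left]
            rintro z ⟨m, rfl⟩ hz
            rcases m with - | m
            · exact hqp.ne_top (q.eq_top_of_isUnit_mem hz (by simpa using isUnit_one))
            · exact hfq (hqp.mem_of_pow_mem _ hz)
          have hmaple : Ideal.span (Set.range fun j => φ (b j)) ≤ Ideal.map φ q := by
            rw [Ideal.span_le]
            rintro y ⟨j, rfl⟩
            exact Ideal.mem_map_of_mem φ (hbq j)
          have hJle : J ≤ q := by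
            have h1 : J.map φ ≤ Ideal.map φ q := hspan ▸ hmaple
            have h2 := IsLocalization.comap_map_of_isPrime_disjoint
              (Submonoid.powers f) R hqp hdisj
            calc J ≤ Ideal.comap φ (J.map φ) := Ideal.le_comap_map
              _ ≤ Ideal.comap φ (Ideal.map φ q) := Ideal.comap_mono h1
              _ = q := h2
          have h1 := hJht q hqp hJle
          have hlt : (i : ℕ∞) < (n : ℕ∞) := by exact_mod_cast hilt
          exact absurd (le_trans h1 hqht) (not_le.mpr hlt)
      obtain ⟨d, hdD, hdavoid⟩ := coset_prime_avoidance T hprime hincomp (b k) D hyp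
      have hdJ : d ∈ J := hdD.1
      have hdS : φ d ∈ S := Ideal.mem_comap.mp hdD.2
      rw [hS] at hdS
      obtain ⟨c, hc⟩ := Ideal.mem_span_range_iff_exists_fun.mp hdS
      set t : Fin n → R := fun j => if j = k then 0 else c j with htdef
      have htk : t k = 0 := if_pos rfl
      have hsum : ∑ j, φ (b j) * t j = φ d := by
        rw [← hc]
        refine Finset.sum_congr rfl (fun j _ => ?_)
        by_cases hjk : j = k
        · subst hjk
          simp [htdef, hv]
        · simp only [htdef, hv, if_neg hjk]
          ring
      obtain ⟨τ, hτ⟩ := exists_SL_update (fun j => φ (b j)) k t htk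
      set b' : Fin n → A := Function.update b k (b k + d) with hb'
      have hb'J : ∀ j, b' j ∈ J := by
        intro j
        by_cases hjk : j = k
        · subst hjk
          rw [hb', Function.update_self]
          exact J.add_mem (hbJ k) hdJ
        · rw [hb', Function.update_of_ne hjk]
          exact hbJ j
      have hb'eq : ∀ j, j ≠ k → b' j = b j := by
        intro j hjk
        rw [hb', Function.update_of_ne hjk]
      have hφb' : (fun j => φ (b' j)) =
          Function.update (fun j => φ (b j)) k (φ (b k) + ∑ j, φ (b j) * t j) := by
        funext j
        by_cases hjk : j = k
        · subst hjk
          rw [Function.update_self, hsum, hb', Function.update_self, map_add]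
        · rw [Function.update_of_ne hjk, hb'eq j hjk]
      have hsum' : ∑ j, φ (b' j) * t j = φ d := by
        rw [← hsum]
        refine Finset.sum_congr rfl (fun j _ => ?_)
        by_cases hjk : j = k
        · subst hjk
          rw [htk, mul_zero, mul_zero]
        · rw [hb'eq j hjk]
      refine ⟨σ * τ, b', hb'J, ?_, ?_, ?_⟩
      · rw [Matrix.SpecialLinearGroup.coe_mul, ← Matrix.vecMul_vecMul, hvec, hτ, hφb']
      · apply le_antisymm
        · rw [Ideal.span_le]
          rintro y ⟨j, rfl⟩
          exact Ideal.mem_map_of_mem φ (hb'J j)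
        · rw [← hspan, Ideal.span_le]
          rintro y ⟨j, rfl⟩
          show φ (b j) ∈ Ideal.span (Set.range fun j => φ (b' j))
          by_cases hjk : j = k
          · subst hjk
            have hφd : φ d ∈ Ideal.span (Set.range fun j => φ (b' j)) := by
              rw [← hsum']
              exact Ideal.sum_mem _ (fun j _ =>
                Ideal.mul_mem_right _ _ (Ideal.subset_span ⟨j, rfl⟩))
            have hbk' : φ (b k) = φ (b' k) - φ d := by
              rw [hb', Function.update_self, map_add]
              ring
            rw [hbk']
            exact Ideal.sub_mem _ (Ideal.subset_span ⟨k, rfl⟩) hφd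
          · rw [← hb'eq j hjk]
            exact Ideal.subset_span ⟨j, rfl⟩
      · intro q' hq'
        have hq'p : q'.IsPrime := hq'.1.1
        have hB'q' : Ideal.span (b' '' {j : Fin n | (j : ℕ) < i + 1}) ≤ q' := hq'.1.2
        have himg : b' '' {j : Fin n | (j : ℕ) < i} = b '' {j : Fin n | (j : ℕ) < i} := by
          apply Set.image_congr
          intro j hj
          refine hb'eq j ?_
          intro h
          rw [h] at hj
          exact absurd hj (lt_irrefl i)
        have hBq' : B ≤ q' := by
          rw [hB, ← himg]
          refine le_trans (Ideal.span_mono (Set.image_mono ?_)) hB'q'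
          intro j hj
          exact Nat.lt_succ_of_lt hj
        obtain ⟨q₀, hq₀min, hq₀le⟩ := Ideal.exists_minimalPrimes_le (J := q') hBq'
        have hq₀p : q₀.IsPrime := hq₀min.1.1
        have hq₀ht := hinv q₀ hq₀min
        have hle' : (⟨q₀, hq₀p⟩ : PrimeSpectrum A) ≤ ⟨q', hq'p⟩ :=
          (PrimeSpectrum.asIdeal_le_asIdeal _ _).mp hq₀le
        by_cases hcase : ((i + 1 : ℕ) : ℕ∞) ≤ Order.height (⟨q₀, hq₀p⟩ : PrimeSpectrum A)
        · exact le_trans hcase (Order.height_mono hle')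
        · have hq₀le_i : Order.height (⟨q₀, hq₀p⟩ : PrimeSpectrum A) ≤ (i : ℕ∞) := by
            have h1 := not_le.mp hcase
            rw [Nat.cast_succ] at h1
            exact (ENat.lt_add_one_iff (by exact_mod_cast (ENat.coe_ne_top i))).mp h1
          have hq₀T : q₀ ∈ T := hfin.mem_toFinset.mpr ⟨hq₀min, hq₀p, hq₀le_i⟩
          have hbd : b k + d ∈ q' := by
            apply hB'q'
            apply Ideal.subset_span
            refine ⟨k, ?_, ?_⟩
            · show (k : ℕ) < i + 1
              exact Nat.lt_succ_self i
            · rw [hb', Function.update_self]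
          have hne : q₀ ≠ q' := by
            rintro rfl
            exact hdavoid q₀ hq₀T hbd
          have hlt : (⟨q₀, hq₀p⟩ : PrimeSpectrum A) < ⟨q', hq'p⟩ := by
            refine lt_of_le_of_ne hle' ?_
            intro h
            exact hne (congrArg PrimeSpectrum.asIdeal h)
          calc ((i + 1 : ℕ) : ℕ∞) = (i : ℕ∞) + 1 := by push_cast; rfl
            _ ≤ Order.height (⟨q₀, hq₀p⟩ : PrimeSpectrum A) + 1 := add_le_add_left hq₀ht 1
            _ ≤ ⨆ y, ⨆ (_ : y < (⟨q', hq'p⟩ : PrimeSpectrum A)), Order.height y + 1 :=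
                le_iSup₂_of_le (⟨q₀, hq₀p⟩ : PrimeSpectrum A) hlt le_rfl
            _ = Order.height (⟨q', hq'p⟩ : PrimeSpectrum A) :=
                (Order.height_eq_iSup_lt_height _).symm
  obtain ⟨σ, b, hbJ, hvec, hspan, hinv⟩ := key n le_rfl
  have himg : b '' {j : Fin n | (j : ℕ) < n} = Set.range b := by
    rw [show {j : Fin n | (j : ℕ) < n} = Set.univ from Set.eq_univ_of_forall (fun j => j.isLt)]
    exact Set.image_univ
  have hspanJ : Ideal.span (Set.range b) ≤ J := by
    rw [Ideal.span_le]
    rintro y ⟨j, rfl⟩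
    exact hbJ j
  refine ⟨σ, b, hbJ, hvec, le_antisymm ?_ ?_⟩
  · rw [← hJ]
    exact le_idealHeight fun p hp => idealHeight_le_height p (le_trans hspanJ hp)
  · refine le_idealHeight fun p hp => ?_
    have : p.asIdeal.IsPrime := p.2
    obtain ⟨q₀, hq₀min, hq₀le⟩ := Ideal.exists_minimalPrimes_le (J := p.asIdeal) hp
    rw [← himg] at hq₀min
    have hq₀p : q₀.IsPrime := hq₀min.1.1
    have hle' : (⟨q₀, hq₀p⟩ : PrimeSpectrum A) ≤ p :=
      (PrimeSpectrum.asIdeal_le_asIdeal _ ⟨p.asIdeal, p.2⟩).mp hq₀le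
    exact le_trans (hinv q₀ hq₀min) (Order.height_mono hle')
end
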